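/- arXiv:1603.01921 — 3 statements merged into one kernel-verified Lean document; each statement's English description precedes it below -/
import Mathlib

section
/- For α > 0, s > 0, and 0 ≤ x, the integral identity ∫₀ˣ (1/(1 + s·u^{−α})) · 2u du = x² − x² · ₂F₁(1, 2/α; 1 + 2/α; −x^α/s) holds, where ₂F₁ is the Gauss hypergeometric function. -/
open Real

/-- The Gauss hypergeometric function `₂F₁(a, b; c; z)`, defined via the Euler integral
representation (valid for `c > b > 0` and `z < 1`, and agreeing with the analytic
continuation of the series `∑_{k≥0} (a)_k (b)_k / (c)_k · z^k/k!` there). -/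
noncomputable def gaussHyp2F1 (a b c z : ℝ) : ℝ :=
  (Real.Gamma c / (Real.Gamma b * Real.Gamma (c - b))) *
    ∫ t in (0 : ℝ)..1, t ^ (b - 1) * (1 - t) ^ (c - b - 1) * (1 - z * t) ^ (-a)

/-- For `α > 0`, `s > 0`, and `x ≥ 0`, one has
`∫₀ˣ (1/(1 + s·u^{−α})) · 2u du = x² − x² · ₂F₁(1, 2/α; 1 + 2/α; −x^α/s)`. -/
theorem stmt6 (α s x : ℝ) (hα : 0 < α) (hs : 0 < s) (hx : 0 ≤ x) :
    ∫ u in (0 : ℝ)..x, (1 / (1 + s * u ^ (-α))) * (2 * u) =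
      x ^ 2 - x ^ 2 * gaussHyp2F1 1 (2 / α) (1 + 2 / α) (-(x ^ α / s)) := by
  rcases eq_or_lt_of_le hx with h0 | hx'
  · subst h0
    simp [gaussHyp2F1]
  -- notation
  set b : ℝ := 2 / α with hb_def
  have hb : 0 < b := by positivity
  set c : ℝ := x ^ α / s with hc_def
  have hxα : 0 < x ^ α := rpow_pos_of_pos hx' α
  have hc : 0 < c := by positivity
  set p : ℝ := 1 / α with hp_def
  have hp : 0 < p := by positivity
  have hpα : p * α = 1 := by rw [hp_def]; field_simp
  -- the common integrand after substitution
  set H : ℝ → ℝ := fun t => 2 * x ^ 2 * x ^ α / α * (t ^ b / (x ^ α * t + s)) with hH_def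
  have hHcont : ContinuousOn H (Set.Icc (0:ℝ) 1) := by
    apply ContinuousOn.mul continuousOn_const
    apply ContinuousOn.div
    · exact (continuous_id.rpow_const fun t => Or.inr hb.le).continuousOn
    · fun_prop
    · intro t ht
      have : 0 ≤ x ^ α * t := mul_nonneg hxα.le ht.1
      positivity
  -- denominators positive
  have hden : ∀ t : ℝ, 0 ≤ t → 0 < x ^ α * t + s := fun t ht => by
    have : 0 ≤ x ^ α * t := mul_nonneg hxα.le ht
    linarith
  -- Step 1: the LHS equals ∫₀¹ H, by substitution u = x * t ^ (1/α)
  have step1 : (∫ u in (0:ℝ)..x, (1 / (1 + s * u ^ (-α))) * (2 * u)) =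
      ∫ t in (0:ℝ)..1, H t := by
    set g : ℝ → ℝ := fun u => (1 / (1 + s * u ^ (-α))) * (2 * u) with hg_def
    set f : ℝ → ℝ := fun t => x * t ^ p with hf_def
    set f' : ℝ → ℝ := fun t => x * (p * t ^ (p - 1)) with hf'_def
    have hEq : Set.EqOn (fun t => (g ∘ f) t * f' t) H (Set.Icc (0:ℝ) 1) := by
      intro t ht
      rcases eq_or_lt_of_le ht.1 with h0 | ht0
      · simp only [← h0, Function.comp, hf_def, hg_def, hH_def]
        rw [Real.zero_rpow hp.ne', Real.zero_rpow hb.ne', mul_zero]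
        simp
      · have htpos : (0:ℝ) < t := ht0
        have hft : f t = x * t ^ p := rfl
        have hftpos : 0 < f t := by
          simp only [hf_def]; positivity
        have key : (x * t ^ p) ^ (-α) = (x ^ α * t)⁻¹ := by
          rw [Real.rpow_neg (by positivity), Real.mul_rpow hx (Real.rpow_nonneg htpos.le p),
            ← Real.rpow_mul htpos.le, hpα, Real.rpow_one]
        simp only [Function.comp, hg_def, hf_def, hf'_def, hH_def]
        rw [key]
        have hA : 0 < x ^ α * t := by positivity
        have h1 : (1 : ℝ) + s * (x ^ α * t)⁻¹ = (x ^ α * t + s) / (x ^ α * t) := by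
          field_simp
        rw [h1, one_div_div]
        have hrw : t ^ p * t ^ (p - 1) * t = t ^ b := by
          rw [← Real.rpow_add htpos, ← Real.rpow_add_one htpos.ne']
          congr 1
          rw [hp_def, hb_def]; ring
        have hAs : 0 < x ^ α * t + s := hden t htpos.le
        calc x ^ α * t / (x ^ α * t + s) * (2 * (x * t ^ p)) * (x * (p * t ^ (p - 1)))
            = (2 * x ^ 2 * p) * (t ^ p * t ^ (p - 1) * t) * x ^ α / (x ^ α * t + s) := by
              ring
          _ = (2 * x ^ 2 * p) * t ^ b * x ^ α / (x ^ α * t + s) := by rw [hrw]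
          _ = 2 * x ^ 2 * x ^ α / α * (t ^ b / (x ^ α * t + s)) := by
              rw [hp_def]; ring
    have hsub : (∫ t in (0:ℝ)..1, (g ∘ f) t * f' t) = ∫ u in (f 0)..(f 1), g u := by
      apply intervalIntegral.integral_comp_mul_deriv'''
      · -- continuity of f on [[0,1]]
        exact (continuousOn_const.mul
          (continuous_id.rpow_const fun t => Or.inr hp.le).continuousOn)
      · -- derivative on the open interval
        intro t ht
        simp only [min_def, max_def] at ht
        norm_num at ht
        have : HasDerivAt f (f' t) t := by
          exact (Real.hasDerivAt_rpow_const (Or.inl ht.1.ne')).const_mul x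
        exact this.hasDerivWithinAt
      · -- continuity of g on the open image
        have himg : f '' Set.Ioo (min (0:ℝ) 1) (max (0:ℝ) 1) ⊆ Set.Ioi (0:ℝ) := by
          rintro u ⟨t, ht, rfl⟩
          simp only [min_def, max_def] at ht
          norm_num at ht
          have : 0 < t ^ p := Real.rpow_pos_of_pos ht.1 p
          exact mul_pos hx' this
        refine ContinuousOn.mono ?_ himg
        intro u hu
        have hu0 : (0:ℝ) < u := hu
        have huα : 0 < u ^ (-α) := Real.rpow_pos_of_pos hu0 _
        have hcont : ContinuousAt g u := by
          have h1 : ContinuousAt (fun u : ℝ => u ^ (-α)) u :=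
            Real.continuousAt_rpow_const u (-α) (Or.inl hu0.ne')
          have h2 : ContinuousAt (fun u : ℝ => 1 + s * u ^ (-α)) u :=
            continuousAt_const.add (continuousAt_const.mul h1)
          have h3 : (1 : ℝ) + s * u ^ (-α) ≠ 0 := by positivity
          exact ((continuousAt_const.div h2 h3).mul (by fun_prop))
        exact hcont.continuousWithinAt
      · -- integrability of g on the image of [[0,1]]
        have himg : f '' Set.uIcc (0:ℝ) 1 ⊆ Set.Icc 0 x := by
          rintro u ⟨t, ht, rfl⟩
          rw [Set.uIcc_of_le (by norm_num)] at ht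
          have h1 : 0 ≤ t ^ p := Real.rpow_nonneg ht.1 p
          have h2 : t ^ p ≤ 1 := by
            calc t ^ p ≤ 1 ^ p := Real.rpow_le_rpow ht.1 ht.2 hp.le
              _ = 1 := Real.one_rpow p
          constructor
          · exact mul_nonneg hx h1
          · calc x * t ^ p ≤ x * 1 := by nlinarith
              _ = x := mul_one x
        refine MeasureTheory.IntegrableOn.mono_set ?_ himg
        have hgIoi : ContinuousOn g (Set.Ioi (0:ℝ)) := by
          intro u hu
          have hu0 : (0:ℝ) < u := hu
          have hcont : ContinuousAt g u := by
            have h1 : ContinuousAt (fun u : ℝ => u ^ (-α)) u :=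
              Real.continuousAt_rpow_const u (-α) (Or.inl hu0.ne')
            have h2 : ContinuousAt (fun u : ℝ => 1 + s * u ^ (-α)) u :=
              continuousAt_const.add (continuousAt_const.mul h1)
            have h3 : (1 : ℝ) + s * u ^ (-α) ≠ 0 := by
              have : 0 < u ^ (-α) := Real.rpow_pos_of_pos hu0 _
              positivity
            exact ((continuousAt_const.div h2 h3).mul (by fun_prop))
          exact hcont.continuousWithinAt
        have hgm : MeasureTheory.AEStronglyMeasurable g
            (MeasureTheory.volume.restrict (Set.Icc 0 x)) := by
          rw [← MeasureTheory.Measure.restrict_congr_set MeasureTheory.Ioc_ae_eq_Icc]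
          exact (hgIoi.mono Set.Ioc_subset_Ioi_self).aestronglyMeasurable measurableSet_Ioc
        refine MeasureTheory.Integrable.mono'
          ((MeasureTheory.integrableOn_const_iff).mpr (Or.inr measure_Icc_lt_top) :
            MeasureTheory.IntegrableOn (fun _ : ℝ => 2 * x) (Set.Icc 0 x) _)
          hgm ?_
        filter_upwards [MeasureTheory.ae_restrict_mem measurableSet_Icc] with u hu
        have h1 : (0:ℝ) ≤ u ^ (-α) := Real.rpow_nonneg hu.1 _
        have h2 : (1:ℝ) ≤ 1 + s * u ^ (-α) := by nlinarith
        have hg0 : 0 ≤ g u := by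
          simp only [hg_def]
          apply mul_nonneg
          · positivity
          · linarith [hu.1]
        rw [Real.norm_eq_abs, abs_of_nonneg hg0]
        simp only [hg_def]
        calc (1 / (1 + s * u ^ (-α))) * (2 * u) ≤ 1 * (2 * u) := by
              apply mul_le_mul_of_nonneg_right _ (by linarith [hu.1])
              rw [div_le_one (by linarith)]; linarith
          _ ≤ 2 * x := by linarith [hu.2]
      · -- integrability of the substituted integrand
        rw [Set.uIcc_of_le (by norm_num : (0:ℝ) ≤ 1)]
        exact (hHcont.integrableOn_Icc).congr_fun (fun t ht => (hEq ht).symm)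
          measurableSet_Icc
    have hf0 : f 0 = 0 := by
      simp only [hf_def, Real.zero_rpow hp.ne', mul_zero]
    have hf1 : f 1 = x := by simp [hf_def]
    rw [hf0, hf1] at hsub
    rw [← hsub]
    exact intervalIntegral.integral_congr (fun t ht => by
      rw [Set.uIcc_of_le (by norm_num : (0:ℝ) ≤ 1)] at ht
      exact hEq ht)
  -- Step 2: the RHS equals ∫₀¹ H
  have hint1 : IntervalIntegrable (fun t : ℝ => t ^ (b - 1)) MeasureTheory.volume 0 1 :=
    intervalIntegral.intervalIntegrable_rpow' (by linarith)
  have hcont_inv : ContinuousOn (fun t : ℝ => (1 + c * t)⁻¹) (Set.uIcc (0:ℝ) 1) := by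
    apply ContinuousOn.inv₀ (by fun_prop)
    intro t ht
    rw [Set.uIcc_of_le (by norm_num : (0:ℝ) ≤ 1)] at ht
    have : 0 ≤ c * t := mul_nonneg hc.le ht.1
    positivity
  have hint2 : IntervalIntegrable (fun t : ℝ => t ^ (b - 1) * (1 + c * t)⁻¹)
      MeasureTheory.volume 0 1 := hint1.mul_continuousOn hcont_inv
  have hI1 : (∫ t in (0:ℝ)..1, t ^ (b - 1)) = 1 / b := by
    rw [integral_rpow (Or.inl (by linarith))]
    rw [Real.one_rpow, Real.zero_rpow (by linarith : b - 1 + 1 ≠ 0)]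
    simp
  have hgauss : gaussHyp2F1 1 b (1 + b) (-c) =
      b * ∫ t in (0:ℝ)..1, t ^ (b - 1) * (1 + c * t)⁻¹ := by
    rw [gaussHyp2F1]
    have e1 : (1 : ℝ) + b - b = 1 := by ring
    have e2 : (1 : ℝ) + b - b - 1 = 0 := by ring
    rw [e2, e1, Real.Gamma_one]
    have e3 : Real.Gamma (1 + b) = b * Real.Gamma b := by
      rw [add_comm, Real.Gamma_add_one hb.ne']
    rw [e3]
    have hΓb : Real.Gamma b ≠ 0 := Real.Gamma_ne_zero (by
      intro m; intro h
      have : (0:ℝ) ≤ m := Nat.cast_nonneg m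
      linarith)
    rw [mul_one, mul_div_assoc, div_self hΓb, mul_one]
    congr 1
    apply intervalIntegral.integral_congr
    intro t ht
    simp only [Real.rpow_zero, mul_one, neg_mul, sub_neg_eq_add, Real.rpow_neg_one]
  have step2 : x ^ 2 - x ^ 2 * gaussHyp2F1 1 b (1 + b) (-c) = ∫ t in (0:ℝ)..1, H t := by
    rw [hgauss]
    have e : x ^ 2 - x ^ 2 * (b * ∫ t in (0:ℝ)..1, t ^ (b - 1) * (1 + c * t)⁻¹) =
        (x ^ 2 * b) * ((∫ t in (0:ℝ)..1, t ^ (b - 1)) -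
          ∫ t in (0:ℝ)..1, t ^ (b - 1) * (1 + c * t)⁻¹) := by
      rw [hI1]; field_simp
    rw [e, ← intervalIntegral.integral_sub hint1 hint2,
      ← intervalIntegral.integral_const_mul]
    apply intervalIntegral.integral_congr
    intro t ht
    rw [Set.uIcc_of_le (by norm_num : (0:ℝ) ≤ 1)] at ht
    have hct : 0 < 1 + c * t := by
      have : 0 ≤ c * t := mul_nonneg hc.le ht.1
      linarith
    rcases eq_or_lt_of_le ht.1 with h0 | ht0
    · simp only [← h0, mul_zero, add_zero, inv_one, mul_one, sub_self, hH_def]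
      rw [Real.zero_rpow hb.ne']
      simp
    · have htb : t ^ (b-1) * t = t ^ b := by
        rw [← Real.rpow_add_one ht0.ne']; ring_nf
      simp only [hH_def]
      have hAs : 0 < x ^ α * t + s := hden t ht0.le
      have hcs : 1 + c * t = (s + x ^ α * t) / s := by
        rw [hc_def]; field_simp
      rw [hcs, ← htb]
      simp only [hb_def]
      have hsx : (0:ℝ) < s + x ^ α * t := by linarith
      field_simp
      ring
  rw [step1, ← step2]
end

section
/- For α = 4 and s = β r⁴ with β > 0, one has ∫₀ʳ (1/(1 + β r⁴ u^{−4})) · (2u/r²) du = 1 − √β · arctan(1/√β). In particular, this value is independent of r. -/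
open Real

/-- For `α = 4` and `s = β r⁴` with `β > 0` and `r > 0`,
`∫₀ʳ (1/(1 + β r⁴ u^{−4})) · (2u/r²) du = 1 − √β · arctan(1/√β)`; in particular the value
is independent of `r`. -/
theorem stmt7 (β r : ℝ) (hβ : 0 < β) (hr : 0 < r) :
    ∫ u in (0 : ℝ)..r, (1 / (1 + β * r ^ 4 * u ^ (-4 : ℤ))) * (2 * u / r ^ 2) =
      1 - Real.sqrt β * Real.arctan (1 / Real.sqrt β) := by
  have hsb : 0 < Real.sqrt β := Real.sqrt_pos.mpr hβ
  have hsb2 : Real.sqrt β ^ 2 = β := Real.sq_sqrt hβ.le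
  have hden : ∀ u : ℝ, 0 < u ^ 4 + β * r ^ 4 := by
    intro u
    positivity
  -- rewrite integrand as a continuous function
  have hfun : ∀ u : ℝ, (1 / (1 + β * r ^ 4 * u ^ (-4 : ℤ))) * (2 * u / r ^ 2)
      = 2 * u ^ 5 / (r ^ 2 * (u ^ 4 + β * r ^ 4)) := by
    intro u
    rcases eq_or_ne u 0 with h | h
    · simp [h]
    · have hu4 : u ^ 4 ≠ 0 := pow_ne_zero _ h
      have hz : u ^ (-4:ℤ) = (u ^ 4)⁻¹ := by
        rw [zpow_neg]; norm_cast
      rw [hz]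
      have hu4' : (0:ℝ) < u ^ 4 := by positivity
      have hp : (1 + β * r ^ 4 * (u ^ 4)⁻¹) ≠ 0 := by positivity
      field_simp
  have hcongr : (∫ u in (0 : ℝ)..r, (1 / (1 + β * r ^ 4 * u ^ (-4 : ℤ))) * (2 * u / r ^ 2))
      = ∫ u in (0 : ℝ)..r, 2 * u ^ 5 / (r ^ 2 * (u ^ 4 + β * r ^ 4)) := by
    apply intervalIntegral.integral_congr
    intro u _
    exact hfun u
  rw [hcongr]
  set F : ℝ → ℝ := fun u => u ^ 2 / r ^ 2 - Real.sqrt β * Real.arctan (u ^ 2 / (r ^ 2 * Real.sqrt β))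
  have hF : ∀ u ∈ Set.uIcc (0:ℝ) r, HasDerivAt F (2 * u ^ 5 / (r ^ 2 * (u ^ 4 + β * r ^ 4))) u := by
    intro u _
    have h1 : HasDerivAt (fun u : ℝ => u ^ 2 / r ^ 2) (2 * u / r ^ 2) u := by
      have := (hasDerivAt_pow 2 u).div_const (r ^ 2)
      simpa using this
    have h2 : HasDerivAt (fun u : ℝ => u ^ 2 / (r ^ 2 * Real.sqrt β))
        (2 * u / (r ^ 2 * Real.sqrt β)) u := by
      have := (hasDerivAt_pow 2 u).div_const (r ^ 2 * Real.sqrt β)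
      simpa using this
    have h3 := (Real.hasDerivAt_arctan (u ^ 2 / (r ^ 2 * Real.sqrt β))).comp u h2
    have h4 := (h3.const_mul (Real.sqrt β))
    have h5 := h1.sub h4
    refine h5.congr_deriv ?_
    have h6 : (1 + (u ^ 2 / (r ^ 2 * Real.sqrt β)) ^ 2) = (u ^ 4 + β * r ^ 4) / (β * r ^ 4) := by
      field_simp
      linear_combination (-(u^4)) * hsb2
    rw [h6]
    have hd := hden u
    field_simp
    ring
  have hcont : Continuous fun u : ℝ => 2 * u ^ 5 / (r ^ 2 * (u ^ 4 + β * r ^ 4)) := by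
    apply Continuous.div (by continuity) (by continuity)
    intro u
    positivity
  rw [intervalIntegral.integral_eq_sub_of_hasDerivAt hF (hcont.intervalIntegrable 0 r)]
  have : r ^ 2 / (r ^ 2 * Real.sqrt β) = 1 / Real.sqrt β := by
    field_simp
  simp [F, this, div_self (pow_ne_zero 2 hr.ne')]
end

section
/- With N^a − 1 interferers each independently being 'inner' (distance density 2u/r² on (0,r)) with probability p and 'outer' (density 2u/(r_d²−r²) on (r, r_d)) with probability 1−p, truncated so that the number of inner interferers is at most n_m = min(k−1, N^a−1), the Laplace transform of the total interference I = ∑ h_i U_i^{−α} at s equals ∑_{ℓ=0}^{n_m} ξ(p, ℓ) · (C(α,s,r)/r²)^ℓ · ((C(α,s,r_d) − C(α,s,r))/(r_d² − r²))^{N^a−1−ℓ}, where ξ(p,ℓ) = p^ℓ(1−p)^{N^a−1−ℓ} C(N^a−1, ℓ) / ∑_{j=0}^{n_m} p^j(1−p)^{N^a−1−j} C(N^a−1, j) and C(α,s,x) = ∫₀ˣ 2u/(1+s u^{−α}) du. -/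
open MeasureTheory ProbabilityTheory

section AuxStmt10
open MeasureTheory Real Set Filter Topology ProbabilityTheory
open scoped ENNReal NNReal

lemma lemA {b : ℝ} (hb : 0 < b) : ∫ h in Ioi (0:ℝ), Real.exp (-(b*h)) = 1/b := by
  have hder : ∀ x ∈ Ici (0:ℝ), HasDerivAt (fun a => (1/b) * (-Real.exp (-(b*a)))) (Real.exp (-(b*x))) x := by
    intro x _
    have := (ProbabilityTheory.hasDerivAt_neg_exp_mul_exp (r := b) (x := x)).const_mul (1/b)
    have e : 1 / b * (b * Real.exp (-(b * x))) = Real.exp (-(b * x)) := by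
      rw [← mul_assoc, one_div, inv_mul_cancel₀ hb.ne', one_mul]
    rwa [e] at this
  have hint : IntegrableOn (fun x => Real.exp (-(b*x))) (Ioi (0:ℝ)) := by
    simpa [neg_mul] using exp_neg_integrableOn_Ioi 0 hb
  have htend : Tendsto (fun a => (1/b) * (-Real.exp (-(b*a)))) atTop (𝓝 0) := by
    have h1 : Tendsto (fun a : ℝ => b * a) atTop atTop := tendsto_id.const_mul_atTop hb
    have h2 : Tendsto (fun a : ℝ => Real.exp (-(b*a))) atTop (𝓝 0) :=
      (tendsto_exp_neg_atTop_nhds_zero).comp h1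
    simpa using (h2.neg.const_mul (1/b))
  rw [integral_Ioi_of_hasDerivAt_of_tendsto' hder hint htend]
  simp

lemma lemB {c : ℝ} (hc : 0 ≤ c) :
    ∫⁻ h, ENNReal.ofReal (Real.exp (-(c*h))) ∂(expMeasure 1) = ENNReal.ofReal (1/(1+c)) := by
  have hpdf : Measurable (exponentialPDF 1) := (measurable_exponentialPDFReal 1).ennreal_ofReal
  have hf : Measurable fun h : ℝ => ENNReal.ofReal (Real.exp (-(c*h))) :=
    ((measurable_id.const_mul c).neg.exp).ennreal_ofReal
  have hEq : expMeasure 1 = volume.withDensity (exponentialPDF 1) := rfl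
  rw [hEq, lintegral_withDensity_eq_lintegral_mul _ hpdf hf]
  have heq2 : (exponentialPDF 1 * fun h => ENNReal.ofReal (Real.exp (-(c*h)))) =
      Set.indicator (Ici (0:ℝ)) (fun h => ENNReal.ofReal (Real.exp (-((1+c)*h)))) := by
    funext h
    rw [Pi.mul_apply, exponentialPDF_eq, Set.indicator_apply]
    by_cases h0 : 0 ≤ h
    · rw [if_pos h0, if_pos (Set.mem_Ici.mpr h0), ← ENNReal.ofReal_mul (by positivity)]
      rw [one_mul, one_mul, ← Real.exp_add]
      congr 1
      ring
    · rw [if_neg h0, if_neg (by simpa using h0)]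
      simp
  rw [heq2, lintegral_indicator measurableSet_Ici _,
    setLIntegral_congr (Ioi_ae_eq_Ici (μ := (volume : Measure ℝ)) (a := (0:ℝ))).symm,
    ← ofReal_integral_eq_lintegral_ofReal]
  · rw [lemA (by linarith : (0:ℝ) < 1 + c)]
  · exact (exp_neg_integrableOn_Ioi 0 (show (0:ℝ) < 1 + c by linarith)).congr_fun
      (fun x _ => by simp only [neg_mul]) measurableSet_Ioi
  · exact ae_of_all _ fun x => (Real.exp_pos _).le

lemma lemC (α s : ℝ) (hα : 0 < α) (hs : 0 ≤ s) (a b c : ℝ) (ha : 0 ≤ a) (hab : a < b)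
    (hc : 0 < c) :
    ∫ y : ℝ × ℝ, Real.exp (-s * (y.2 * y.1 ^ (-α)))
      ∂((volume.withDensity fun u =>
          Set.indicator (Set.Ioo a b) (fun u => ENNReal.ofReal (2*u/c)) u).prod (expMeasure 1))
    = (∫ u in a..b, 2*u/(1+s*u^(-α)))/c := by
  haveI : IsProbabilityMeasure (expMeasure 1) := isProbabilityMeasure_expMeasure one_pos
  set D : ℝ → ℝ≥0∞ := fun u => Set.indicator (Set.Ioo a b) (fun u => ENNReal.ofReal (2*u/c)) u
    with hD_def
  have hD : Measurable D :=
    Measurable.indicator ((measurable_id.const_mul 2).div_const c).ennreal_ofReal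
      measurableSet_Ioo
  haveI : SigmaFinite (volume.withDensity D) := by
    apply SigmaFinite.withDensity_of_ne_top' 
    intro u
    by_cases h : u ∈ Set.Ioo a b
    · simp [hD_def, Set.indicator_of_mem h]
    · simp [hD_def, Set.indicator_of_notMem h]
  have hg : Measurable fun y : ℝ × ℝ => Real.exp (-s * (y.2 * y.1 ^ (-α))) := by
    measurability
  rw [integral_eq_lintegral_of_nonneg_ae (ae_of_all _ fun y => (Real.exp_pos _).le)
    hg.aestronglyMeasurable,
    lintegral_prod _ hg.ennreal_ofReal.aemeasurable,
    lintegral_withDensity_eq_lintegral_mul _ hD hg.ennreal_ofReal.lintegral_prod_right']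
  have key : (fun u => D u * ∫⁻ h, ENNReal.ofReal (Real.exp (-s * (h * u ^ (-α)))) ∂expMeasure 1)
      = Set.indicator (Set.Ioo a b)
          (fun u => ENNReal.ofReal (2*u/c * (1/(1+s*u^(-α))))) := by
    funext u
    rw [hD_def]
    simp only [Set.indicator_apply]
    split_ifs with hu
    · have hu0 : 0 < u := lt_of_le_of_lt ha hu.1
      have hcd : 0 ≤ s * u^(-α) := mul_nonneg hs (Real.rpow_nonneg hu0.le _)
      have hrw : (fun h : ℝ => ENNReal.ofReal (Real.exp (-s * (h * u ^ (-α)))))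
          = fun h => ENNReal.ofReal (Real.exp (-((s*u^(-α))*h))) := by
        funext h; ring_nf
      rw [hrw, lemB hcd, ← ENNReal.ofReal_mul (by positivity)]
    · rw [zero_mul]
  simp only [Pi.mul_apply]
  rw [lintegral_congr fun u => congrFun key u, lintegral_indicator measurableSet_Ioo]
  have hnn : ∀ u ∈ Set.Ioo a b, 0 ≤ 2*u/c * (1/(1+s*u^(-α))) := by
    intro u hu
    have hu0 : 0 < u := lt_of_le_of_lt ha hu.1
    have hd : 0 ≤ s * u^(-α) := mul_nonneg hs (Real.rpow_nonneg hu0.le _)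
    have h1 : 0 < 1 + s*u^(-α) := by linarith
    positivity
  have m1 : Measurable fun u : ℝ => u ^ (-α) := by measurability
  have m2 : Measurable fun u : ℝ => 1 + s * u ^ (-α) := (m1.const_mul s).const_add 1
  have hmeas2 : Measurable fun u : ℝ => 2*u/c * (1/(1+s*u^(-α))) :=
    ((measurable_id.const_mul 2).div_const c).mul (measurable_const.div m2)
  have hint : IntegrableOn (fun u => 2*u/c * (1/(1+s*u^(-α)))) (Set.Ioo a b) := by
    apply Measure.integrableOn_of_bounded (M := 2*b/c * 1)
    · simp [Real.volume_Ioo]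
    · exact hmeas2.aestronglyMeasurable
    · filter_upwards [self_mem_ae_restrict measurableSet_Ioo] with u hu
      have hu0 : 0 < u := lt_of_le_of_lt ha hu.1
      have hd : 0 ≤ s * u^(-α) := mul_nonneg hs (Real.rpow_nonneg hu0.le _)
      rw [Real.norm_eq_abs, abs_of_nonneg (hnn u hu)]
      have hle : 1/(1+s*u^(-α)) ≤ 1 := by
        rw [div_le_one (by linarith)]; linarith
      calc 2*u/c * (1/(1+s*u^(-α))) ≤ 2*u/c * 1 :=
            mul_le_mul_of_nonneg_left hle (by positivity)
        _ ≤ 2*b/c * 1 := by gcongr; exact hu.2.le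
  rw [← ofReal_integral_eq_lintegral_ofReal hint
      ((ae_restrict_iff' measurableSet_Ioo).2 (ae_of_all _ hnn)),
    ENNReal.toReal_ofReal (setIntegral_nonneg measurableSet_Ioo hnn)]
  have hfun : (fun u : ℝ => 2*u/c * (1/(1+s*u^(-α)))) = fun u => (2*u/(1+s*u^(-α)))/c := by
    funext u; ring
  rw [hfun, integral_div, intervalIntegral.integral_of_le hab.le, integral_Ioc_eq_integral_Ioo]

lemma lemD (μ : Measure (ℝ×ℝ)) [SigmaFinite μ] (f : ℝ×ℝ → ℝ) (n : ℕ) :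
    ∫ x : Fin n → ℝ×ℝ, ∏ i, f (x i) ∂(Measure.pi fun _ => μ) = (∫ y, f y ∂μ)^n := by
  letI : MeasureSpace (ℝ×ℝ) := ⟨μ⟩
  haveI : SigmaFinite (volume : Measure (ℝ×ℝ)) := ‹SigmaFinite μ›
  have hvol : (Measure.pi fun _ : Fin n => μ) = (volume : Measure (Fin n → ℝ×ℝ)) := rfl
  rw [hvol, show (volume : Measure (Fin n → ℝ×ℝ)) = Measure.pi fun _ => (volume : Measure (ℝ×ℝ)) from rfl,
    integral_fintype_prod_eq_pow (ι := Fin n) f, Fintype.card_fin]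
  rfl

lemma lemInt (α s : ℝ) (hs : 0 ≤ s) {x y : ℝ} (hx : 0 ≤ x) (hxy : x ≤ y) :
    IntervalIntegrable (fun u : ℝ => 2*u/(1+s*u^(-α))) volume x y := by
  rw [intervalIntegrable_iff_integrableOn_Ioc_of_le hxy]
  have m1 : Measurable fun u : ℝ => u ^ (-α) := by measurability
  have m2 : Measurable fun u : ℝ => 2*u/(1+s*u^(-α)) :=
    (measurable_id.const_mul 2).div ((m1.const_mul s).const_add 1)
  apply Measure.integrableOn_of_bounded (M := 2*y)
  · simp [Real.volume_Ioc]
  · exact m2.aestronglyMeasurable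
  · filter_upwards [self_mem_ae_restrict measurableSet_Ioc] with u hu
    have hu0 : 0 < u := lt_of_le_of_lt hx hu.1
    have hd : 0 ≤ s * u^(-α) := mul_nonneg hs (Real.rpow_nonneg hu0.le _)
    have hnn : 0 ≤ 2*u/(1+s*u^(-α)) := by positivity
    rw [Real.norm_eq_abs, abs_of_nonneg hnn]
    calc 2*u/(1+s*u^(-α)) ≤ 2*u/1 := by gcongr <;> linarith
      _ = 2*u := div_one _
      _ ≤ 2*y := by linarith [hu.2]

lemma lemSF (S : Set ℝ) (g : ℝ → ℝ) :
    SigmaFinite (volume.withDensity fun u =>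
      Set.indicator S (fun u => ENNReal.ofReal (g u)) u) := by
  apply SigmaFinite.withDensity_of_ne_top'
  intro u
  by_cases h : u ∈ S
  · simp [Set.indicator_of_mem h]
  · simp [Set.indicator_of_notMem h]

end AuxStmt10

/-- With `N^a − 1` interferers, each independently `inner` (distance density
`2u/r²` on `(0,r)`) with probability `p = (k−1)/(N_t−1)` and `outer` (density
`2u/(r_d²−r²)` on `(r, r_d)`) with probability `1−p`, the number of inner interferers being a
`Binomial(N^a−1, p)` truncated to be at most `n_m = min(k−1, N^a−1)`, and with i.i.d. `Exp(1)`
fading independent of everything, the Laplace transform of the total interference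
`I = ∑ hᵢ Uᵢ^{−α}` at `s` (the mixture over the truncated-binomial count `ℓ` of the expectation
of `exp(−sI)` given `ℓ` inner and `N^a−1−ℓ` outer interferers) equals
`∑_{ℓ=0}^{n_m} ξ(p,ℓ) (C(α,s,r)/r²)^ℓ ((C(α,s,r_d) − C(α,s,r))/(r_d² − r²))^{N^a−1−ℓ}`,
where `C(α,s,x) = ∫₀ˣ 2u/(1+s u^{−α}) du`. -/
theorem stmt10 (Nt Na k : ℕ) (hNt : 2 ≤ Nt) (hk1 : 1 ≤ k) (hkNt : k ≤ Nt)
    (hNa1 : 1 ≤ Na) (hNaNt : Na ≤ Nt)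
    (rd r : ℝ) (hr : 0 < r) (hrd : r < rd)
    (α : ℝ) (hα : 0 < α) (s : ℝ) (hs : 0 ≤ s)
    (p : ℝ) (hp : p = ((k : ℝ) - 1) / ((Nt : ℝ) - 1))
    (nm : ℕ) (hnm : nm = min (k - 1) (Na - 1))
    (ξ : ℕ → ℝ)
    (hξ : ∀ ℓ, ξ ℓ = p ^ ℓ * (1 - p) ^ (Na - 1 - ℓ) * (Na - 1).choose ℓ /
      ∑ j ∈ Finset.range (nm + 1), p ^ j * (1 - p) ^ (Na - 1 - j) * (Na - 1).choose j)
    (C : ℝ → ℝ) (hC : ∀ x, C x = ∫ u in (0 : ℝ)..x, 2 * u / (1 + s * u ^ (-α)))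
    (μin μout : Measure ℝ)
    (hμin : μin = volume.withDensity fun u =>
      Set.indicator (Set.Ioo (0 : ℝ) r) (fun u => ENNReal.ofReal (2 * u / r ^ 2)) u)
    (hμout : μout = volume.withDensity fun u =>
      Set.indicator (Set.Ioo r rd) (fun u => ENNReal.ofReal (2 * u / (rd ^ 2 - r ^ 2))) u) :
    ∑ ℓ ∈ Finset.range (nm + 1), ξ ℓ *
      ∫ x : (Fin ℓ → ℝ × ℝ) × (Fin (Na - 1 - ℓ) → ℝ × ℝ),
        Real.exp (-s * ((∑ i, (x.1 i).2 * (x.1 i).1 ^ (-α)) +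
          ∑ j, (x.2 j).2 * (x.2 j).1 ^ (-α)))
        ∂((Measure.pi fun _ : Fin ℓ => μin.prod (expMeasure 1)).prod
          (Measure.pi fun _ : Fin (Na - 1 - ℓ) => μout.prod (expMeasure 1))) =
    ∑ ℓ ∈ Finset.range (nm + 1), ξ ℓ * (C r / r ^ 2) ^ ℓ *
      ((C rd - C r) / (rd ^ 2 - r ^ 2)) ^ (Na - 1 - ℓ) := by
  haveI : IsProbabilityMeasure (expMeasure 1) := isProbabilityMeasure_expMeasure one_pos
  haveI hsf1 : SigmaFinite μin := hμin ▸ lemSF _ _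
  haveI hsf2 : SigmaFinite μout := hμout ▸ lemSF _ _
  set f : ℝ × ℝ → ℝ := fun y => Real.exp (-s * (y.2 * y.1 ^ (-α))) with hf
  have hCin : ∫ y, f y ∂(μin.prod (expMeasure 1)) = C r / r ^ 2 := by
    rw [hμin, hf, lemC α s hα hs 0 r (r ^ 2) le_rfl hr (by positivity), hC r]
  have hCout : ∫ y, f y ∂(μout.prod (expMeasure 1)) = (C rd - C r) / (rd ^ 2 - r ^ 2) := by
    rw [hμout, hf, lemC α s hα hs r rd (rd ^ 2 - r ^ 2) hr.le hrd
      (by nlinarith)]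
    congr 1
    have h1 := lemInt α s hs (le_refl (0:ℝ)) hr.le
    have h2 := lemInt α s hs hr.le hrd.le
    have := intervalIntegral.integral_add_adjacent_intervals h1 h2
    rw [hC r, hC rd]
    linarith
  refine Finset.sum_congr rfl fun ℓ hℓ => ?_
  rw [mul_assoc]
  congr 1
  calc (∫ x : (Fin ℓ → ℝ × ℝ) × (Fin (Na - 1 - ℓ) → ℝ × ℝ),
        Real.exp (-s * ((∑ i, (x.1 i).2 * (x.1 i).1 ^ (-α)) +
          ∑ j, (x.2 j).2 * (x.2 j).1 ^ (-α)))
        ∂((Measure.pi fun _ : Fin ℓ => μin.prod (expMeasure 1)).prod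
          (Measure.pi fun _ : Fin (Na - 1 - ℓ) => μout.prod (expMeasure 1))))
      = ∫ x : (Fin ℓ → ℝ × ℝ) × (Fin (Na - 1 - ℓ) → ℝ × ℝ),
          (∏ i, f (x.1 i)) * ∏ j, f (x.2 j)
        ∂((Measure.pi fun _ : Fin ℓ => μin.prod (expMeasure 1)).prod
          (Measure.pi fun _ : Fin (Na - 1 - ℓ) => μout.prod (expMeasure 1))) := by
        congr 1
        funext x
        rw [mul_add, Real.exp_add, Finset.mul_sum, Finset.mul_sum, Real.exp_sum, Real.exp_sum]
    _ = (∫ y, f y ∂(μin.prod (expMeasure 1))) ^ ℓ *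
        (∫ y, f y ∂(μout.prod (expMeasure 1))) ^ (Na - 1 - ℓ) := by
        rw [integral_prod_mul (fun x1 : Fin ℓ → ℝ × ℝ => ∏ i, f (x1 i))
          (fun x2 : Fin (Na - 1 - ℓ) → ℝ × ℝ => ∏ j, f (x2 j)), lemD, lemD]
    _ = (C r / r ^ 2) ^ ℓ * ((C rd - C r) / (rd ^ 2 - r ^ 2)) ^ (Na - 1 - ℓ) := by
        rw [hCin, hCout]
end
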